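/- If p ∈ ℂ[z₀,…,z₄] is a nonzero homogeneous polynomial of degree k satisfying p ∘ g₁ = p and p ∘ g₂ = p, then k is divisible by 5. -/

import Mathlib

open MvPolynomial

/-- `ω = exp(2πi/5)`, a primitive fifth root of unity. -/
noncomputable def ω : ℂ := Complex.exp (2 * Real.pi * Complex.I / 5)

/-- Substitution `p ↦ p ∘ g₁` where `g₁(z₀,z₁,z₂,z₃,z₄) = (z₄,z₀,z₁,z₂,z₃)`;
the variable `zᵢ` of `p` receives the `i`-th coordinate `z_{i-1}` of `g₁(z)`. -/
noncomputable def compG1 : MvPolynomial (Fin 5) ℂ →ₐ[ℂ] MvPolynomial (Fin 5) ℂ :=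
  aeval fun i : Fin 5 => X (i - 1)

/-- Substitution `p ↦ p ∘ g₂` where `g₂(z₀,…,z₄) = (z₀, ω z₁, ω² z₂, ω³ z₃, ω⁴ z₄)`. -/
noncomputable def compG2 : MvPolynomial (Fin 5) ℂ →ₐ[ℂ] MvPolynomial (Fin 5) ℂ :=
  aeval fun i : Fin 5 => C (ω ^ (i : ℕ)) * X i

lemma omega_prim : IsPrimitiveRoot ω 5 := by
  have := Complex.isPrimitiveRoot_exp 5 (by norm_num)
  unfold ω
  convert this using 2
  norm_num

lemma aeval_scale_coeff (u : Fin 5 → ℂ) (p : MvPolynomial (Fin 5) ℂ) (d : Fin 5 →₀ ℕ) :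
    coeff d (aeval (fun i => C (u i) * X i) p) = (∏ i, u i ^ d i) * coeff d p := by
  induction p using MvPolynomial.induction_on' with
  | monomial e c =>
    have key : (aeval fun i : Fin 5 => C (u i) * X i) (monomial e c)
        = monomial e (c * ∏ i, u i ^ e i) := by
      rw [aeval_monomial, monomial_eq]
      rw [Finsupp.prod_fintype _ _ fun i => pow_zero _,
          Finsupp.prod_fintype _ _ fun i => pow_zero _]
      simp only [mul_pow, Finset.prod_mul_distrib, ← C_pow, ← map_prod, algebraMap_eq, map_mul]
      ring
    rw [key, coeff_monomial, coeff_monomial]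
    split
    · next h => subst h; ring
    · ring
  | add p q hp hq => rw [map_add, coeff_add, hp, hq, coeff_add, mul_add]

/-- A nonzero homogeneous polynomial of degree `k` invariant under both `g₁` and `g₂`
has degree divisible by 5. -/
theorem stmt_4 (k : ℕ) (p : MvPolynomial (Fin 5) ℂ) (hp0 : p ≠ 0)
    (hph : p ∈ homogeneousSubmodule (Fin 5) ℂ k)
    (h1 : compG1 p = p) (h2 : compG2 p = p) : 5 ∣ k := by
  classical
  obtain ⟨d, hd⟩ : ∃ d, coeff d p ≠ 0 := by
    by_contra h
    push_neg at h
    exact hp0 (by ext e; simpa using h e)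
  -- g₂-invariance ⇒ weighted degree divisible by 5
  have hw : ∀ e : Fin 5 →₀ ℕ, coeff e p ≠ 0 → (5 : ℕ) ∣ ∑ i : Fin 5, (i : ℕ) * e i := by
    intro e he
    have hcs := aeval_scale_coeff (fun i : Fin 5 => ω ^ (i : ℕ)) p e
    rw [show (aeval fun i : Fin 5 => C ((fun j : Fin 5 => ω ^ (j : ℕ)) i) * X i) p
        = compG2 p from rfl, h2] at hcs
    have hpow : (∏ i : Fin 5, (ω ^ (i : ℕ)) ^ e i) = 1 :=
      mul_right_cancel₀ he (by rw [one_mul]; exact hcs.symm)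
    rw [← omega_prim.pow_eq_one_iff_dvd]
    rw [← Finset.prod_pow_eq_pow_sum]
    simpa [← pow_mul] using hpow
  -- the shifted exponent vector
  have hinj : Function.Injective (fun i : Fin 5 => i - 1) :=
    (Equiv.subRight (1 : Fin 5)).injective
  set d' := Finsupp.mapDomain (fun i : Fin 5 => i - 1) d with hd'
  have hd'ne : coeff d' p ≠ 0 := by
    have hr : compG1 p = rename (fun i : Fin 5 => i - 1) p := by
      rw [compG1, rename_eq_aeval]; rfl
    rw [← h1, hr, hd', coeff_rename_mapDomain _ hinj]
    exact hd
  have hdd : ∀ j : Fin 5, d' j = d (j + 1) := fun j => by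
    have h := Finsupp.mapDomain_apply (f := fun i : Fin 5 => i - 1) hinj d (j + 1)
    simpa using h
  have hsum' : ∑ j : Fin 5, (j : ℕ) * d' j
      = ∑ i : Fin 5, ((i - 1 : Fin 5) : ℕ) * d i := by
    refine Fintype.sum_equiv (Equiv.addRight (1 : Fin 5)) _ _ fun j => ?_
    simp [hdd j, Equiv.addRight]
  -- degree of d is k
  have hk : ∑ i : Fin 5, d i = k := by
    have := hph hd
    rw [← this, Finsupp.weight_apply, Finsupp.sum_fintype]
    · simp
    · simp
  -- work in ZMod 5
  have A : ((∑ i : Fin 5, (i : ℕ) * d i : ℕ) : ZMod 5) = 0 :=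
    (ZMod.natCast_eq_zero_iff _ _).mpr (hw d hd)
  have B : ((∑ i : Fin 5, (i : ℕ) * d' i : ℕ) : ZMod 5) = 0 :=
    (ZMod.natCast_eq_zero_iff _ _).mpr (hw d' hd'ne)
  rw [← ZMod.natCast_eq_zero_iff]
  rw [hsum'] at B
  have hcoe : ∀ i : Fin 5, (((i : ℕ) : ZMod 5)) = ((((i - 1 : Fin 5) : ℕ) : ZMod 5)) + 1 := by
    decide
  push_cast at A B ⊢
  rw [← hk]
  push_cast
  calc (∑ i : Fin 5, (d i : ZMod 5))
      = ∑ i : Fin 5, (((i : ℕ) : ZMod 5) * d i - ((((i - 1 : Fin 5) : ℕ)) : ZMod 5) * d i) := by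
        refine Finset.sum_congr rfl fun i _ => ?_
        rw [← sub_mul, hcoe i]; ring
    _ = 0 := by rw [Finset.sum_sub_distrib, A, B, sub_zero]
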